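/- The sequence generated by x_{n+3} x_n = x_{n+2} x_{n+1} + x_{n+1} + x_{n+2} with x_0 = x_1 = x_2 = 1 consists entirely of positive integers. -/
import Mathlib

private def cc : ℕ → ℚ := fun n => if Even n then 3 else 5

theorem heiho_ones_integrality (x : ℕ → ℚ)
    (h0 : x 0 = 1) (h1 : x 1 = 1) (h2 : x 2 = 1)
    (hrec : ∀ n, x (n + 3) = (x (n + 2) * x (n + 1) + x (n + 1) + x (n + 2)) / x n) :
    ∀ n, ∃ m : ℤ, 0 < m ∧ x n = m := by
  have hcz : ∀ n, ∃ k : ℤ, cc n = (k : ℚ) ∧ 3 ≤ k := by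
    intro n
    by_cases h : Even n
    · exact ⟨3, by simp [cc, h], by norm_num⟩
    · exact ⟨5, by simp [cc, h], by norm_num⟩
  have hc2 : ∀ n, cc (n + 2) = cc n := by
    intro n
    simp [cc, Nat.even_add_one, -Nat.not_even_iff_odd]
  have key : ∀ n, ∃ a b : ℤ, x n = (a : ℚ) ∧ x (n + 1) = (b : ℚ) ∧ 1 ≤ a ∧ a ≤ b ∧
      x (n + 2) + x n + 1 = cc n * x (n + 1) ∧
      cc (n + 1) * x n * x (n + 2) = cc n * x (n + 1) * (x (n + 1) + 1) - 1 := by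
    intro n
    induction n with
    | zero =>
      refine ⟨1, 1, by exact_mod_cast h0, by exact_mod_cast h1, le_refl _, le_refl _, ?_, ?_⟩
      · rw [h0, h1, h2]; norm_num [cc]
      · rw [h0, h1, h2]; norm_num [cc]
    | succ n ih =>
      obtain ⟨a, b, hxa, hxb, ha1, hab, hE, hJ⟩ := ih
      obtain ⟨k, hck, hk3⟩ := hcz n
      obtain ⟨k1, hck1, hk13⟩ := hcz (n + 1)
      have hb1 : (1 : ℤ) ≤ b := le_trans ha1 hab
      have hxc : x (n + 2) = ((k * b - a - 1 : ℤ) : ℚ) := by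
        push_cast
        rw [← hck, ← hxa, ← hxb]
        linarith [hE]
      have ha0 : (0 : ℚ) < (a : ℚ) := by exact_mod_cast lt_of_lt_of_le one_pos ha1
      have hxn0 : x n ≠ 0 := by rw [hxa]; exact ne_of_gt ha0
      have hmul : x (n + 3) * x n = x (n + 2) * x (n + 1) + x (n + 1) + x (n + 2) := by
        rw [hrec n]; field_simp
      have hE1 : x (n + 3) + x (n + 1) + 1 = cc (n + 1) * x (n + 2) := by
        apply mul_right_cancel₀ hxn0
        linear_combination hmul + (x (n + 1) + 1) * hE - hJ
      have hJ1 : cc (n + 2) * x (n + 1) * x (n + 3) =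
          cc (n + 1) * x (n + 2) * (x (n + 2) + 1) - 1 := by
        rw [hc2 n]
        linear_combination cc n * x (n + 1) * hE1 + hJ - cc (n + 1) * x (n + 2) * hE
      refine ⟨b, k * b - a - 1, hxb, hxc, hb1, ?_, ?_, ?_⟩
      · nlinarith [hk3, hb1, hab]
      · exact hE1
      · exact hJ1
  intro n
  obtain ⟨a, b, hxa, _, ha1, _⟩ := key n
  exact ⟨a, lt_of_lt_of_le one_pos ha1, hxa⟩
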